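/- Let p be a prime, h ≥ 2, and R a commutative ring containing an element ζ with ζ^(p^h − 1) = 1, and elements u₁, …, u_{h−1}. Define the h × h matrix B(u₁, …, u_{h−1}) over the p-typical Witt ring W(R) by: B_{i,i−1} = 1 for 2 ≤ i ≤ h, B_{1,h} = 1, B_{i,h} = [u_{h−i+1}] (the Teichmüller lift) for 2 ≤ i ≤ h, and all other entries 0. Let φ be the diagonal matrix over W(R) with φ_{ii} = [ζ^(p^(h−i))] for 1 ≤ i ≤ h. Then φ is invertible and f(φ) · B(ζ^(1−p)·u₁, ζ^(1−p²)·u₂, …, ζ^(1−p^(h−1))·u_{h−1}) · φ⁻¹ = B(u₁, …, u_{h−1}), where f(φ) denotes the entrywise Frobenius. -/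

import Mathlib

namespace WittVector
open MvPolynomial
variable (p : ℕ) [hp : Fact p.Prime] {R : Type} [CommRing R]

private theorem frob_teich_aux₁ {S : Type} (x : MvPolynomial S ℚ) :
    frobenius (teichmuller p x) = teichmuller p (x ^ p) := by
  apply (ghostMap.bijective_of_invertible p (MvPolynomial S ℚ)).1
  ext1 n
  rw [ghostMap_apply, ghostMap_apply, ghostComponent_frobenius, ghostComponent_teichmuller,
    ghostComponent_teichmuller, ← pow_mul, ← pow_succ']

private theorem frob_teich_aux₂ {S : Type} (x : MvPolynomial S ℤ) :
    frobenius (teichmuller p x) = teichmuller p (x ^ p) := by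
  refine map_injective (MvPolynomial.map (Int.castRingHom ℚ))
    (MvPolynomial.map_injective _ Int.cast_injective) ?_
  rw [(frobenius_isPoly p).map, map_teichmuller, map_teichmuller, frob_teich_aux₁]
  simp only [map_pow]

theorem frobenius_teichmuller' (r : R) :
    frobenius (teichmuller p r) = teichmuller p (r ^ p) := by
  rcases counit_surjective R r with ⟨x, rfl⟩
  rw [← map_teichmuller, ← (frobenius_isPoly p).map, frob_teich_aux₂, map_teichmuller]
  simp only [map_pow]

end WittVector


/-- The matrix form `B(u₁, …, u_{h−1})` of the standard display of height `h` and dimension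
`h−1` (1-indexed entries): `B_{i,i−1} = 1` for `2 ≤ i ≤ h`, `B_{1,h} = 1`,
`B_{i,h} = [u_{h−i+1}]` (Teichmüller lift) for `2 ≤ i ≤ h`, all other entries `0`. -/
noncomputable def standardDisplayMatrix (p h : ℕ) [Fact p.Prime] (R : Type) [CommRing R]
    (u : ℕ → R) : Matrix (Fin h) (Fin h) (WittVector p R) :=
  Matrix.of fun i j =>
    if 2 ≤ (i : ℕ) + 1 ∧ ((j : ℕ) + 1) + 1 = (i : ℕ) + 1 then 1
    else if (i : ℕ) + 1 = 1 ∧ (j : ℕ) + 1 = h then 1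
    else if 2 ≤ (i : ℕ) + 1 ∧ (j : ℕ) + 1 = h then
      WittVector.teichmuller p (u (h - ((i : ℕ) + 1) + 1))
    else 0

open WittVector in
/-- For a `(p^h − 1)`-st root of unity `ζ`, the action
`ζ · (u₁, …, u_{h−1}) = (ζ^(1−p)u₁, …, ζ^(1−p^(h−1))u_{h−1})` lifts to an isomorphism of
displays via the diagonal change-of-coordinates matrix `φ = diag([ζ^(p^(h−1))], …, [ζ^p], [ζ])`:
`φ` is invertible and `f(φ) · B(ζ^(1−p)u₁, …, ζ^(1−p^(h−1))u_{h−1}) · φ⁻¹ = B(u₁, …, u_{h−1})`. -/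
theorem standardDisplay_root_of_unity_action (p : ℕ) [Fact p.Prime] (h : ℕ) (hh : 2 ≤ h)
    (R : Type) [CommRing R] (ζ : Rˣ) (hζ : ζ ^ (p ^ h - 1) = 1) (u : ℕ → R)
    (φ : Matrix (Fin h) (Fin h) (WittVector p R))
    (hφdef : φ = Matrix.diagonal fun i : Fin h =>
      WittVector.teichmuller p ((ζ : R) ^ (p ^ (h - ((i : ℕ) + 1))))) :
    IsUnit φ ∧
    (φ.map ⇑(WittVector.frobenius : WittVector p R →+* WittVector p R)) *
        standardDisplayMatrix p h R
          (fun i => ((ζ ^ ((1 : ℤ) - (p : ℤ) ^ i) : Rˣ) : R) * u i) * φ⁻¹ =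
      standardDisplayMatrix p h R u := by
  subst hφdef
  set ψ : Matrix (Fin h) (Fin h) (WittVector p R) := Matrix.diagonal fun i : Fin h =>
      WittVector.teichmuller p (((ζ⁻¹ : Rˣ) : R) ^ (p ^ (h - ((i : ℕ) + 1)))) with hψ
  have hmul : (Matrix.diagonal fun i : Fin h =>
      WittVector.teichmuller p ((ζ : R) ^ (p ^ (h - ((i : ℕ) + 1))))) * ψ = 1 := by
    have key : ∀ i : Fin h, WittVector.teichmuller p ((ζ : R) ^ (p ^ (h - ((i : ℕ) + 1)))) *
        WittVector.teichmuller p (((ζ⁻¹ : Rˣ) : R) ^ (p ^ (h - ((i : ℕ) + 1)))) = 1 := by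
      intro i
      rw [← map_mul, ← mul_pow, ← Units.val_mul, mul_inv_cancel, Units.val_one, one_pow, map_one]
    rw [hψ, Matrix.diagonal_mul_diagonal]
    simp only [key, Matrix.diagonal_one]
  refine ⟨IsUnit.of_mul_eq_one _ hmul, ?_⟩
  rw [Matrix.inv_eq_right_inv hmul, Matrix.diagonal_map (map_zero _)]
  ext i j
  rw [Matrix.mul_diagonal, Matrix.diagonal_mul, frobenius_teichmuller']
  have hi := i.is_lt
  have hj := j.is_lt
  simp only [standardDisplayMatrix, Matrix.of_apply]
  split_ifs with h1 h2 h3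
  · -- subdiagonal entry
    have hk : p ^ (h - ((i : ℕ) + 1)) * p = p ^ (h - ((j : ℕ) + 1)) := by
      rw [← pow_succ]; congr 1; omega
    rw [mul_one, ← pow_mul, hk, ← map_mul, ← mul_pow, ← Units.val_mul, mul_inv_cancel,
      Units.val_one, one_pow, map_one]
  · -- top-right corner entry
    have e0 : h - ((i : ℕ) + 1) + 1 = h := by omega
    have e1 : ((ζ : R) ^ p ^ (h - ((i : ℕ) + 1))) ^ p = ((ζ ^ p ^ h : Rˣ) : R) := by
      rw [← pow_mul, ← pow_succ, e0, Units.val_pow_eq_pow_val]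
    have e2 : ζ ^ p ^ h = ζ := by
      have e3 : p ^ h = (p ^ h - 1) + 1 := by
        have := Nat.one_le_pow h p (Fact.out : p.Prime).pos
        omega
      rw [e3, pow_succ, hζ, one_mul]
    have e4 : h - ((j : ℕ) + 1) = 0 := by omega
    rw [mul_one, e1, e2, e4, pow_zero, pow_one, ← map_mul, ← Units.val_mul, mul_inv_cancel,
      Units.val_one, map_one]
  · -- last-column entries
    set k := h - ((i : ℕ) + 1) with hk
    have e4 : h - ((j : ℕ) + 1) = 0 := by omega
    have hRz : ((ζ : R) ^ p ^ k) ^ p = ((ζ ^ ((p : ℤ) ^ (k + 1)) : Rˣ) : R) := by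
      have : (ζ ^ ((p : ℤ) ^ (k + 1)) : Rˣ) = ζ ^ (p ^ (k + 1) : ℕ) := by
        rw [← zpow_natCast]; norm_cast
      rw [this, Units.val_pow_eq_pow_val, pow_succ, pow_mul]
    have hU : ζ ^ ((p : ℤ) ^ (k + 1)) * ζ ^ ((1 : ℤ) - (p : ℤ) ^ (k + 1)) * ζ⁻¹ = 1 := by
      have hadd : (p : ℤ) ^ (k + 1) + ((1 : ℤ) - (p : ℤ) ^ (k + 1)) = 1 := by ring
      rw [← zpow_add, hadd, zpow_one, mul_inv_cancel]
    have hR : ((ζ ^ ((p : ℤ) ^ (k + 1)) : Rˣ) : R) *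
        ((ζ ^ ((1 : ℤ) - (p : ℤ) ^ (k + 1)) : Rˣ) : R) * ((ζ⁻¹ : Rˣ) : R) = 1 := by
      rw [← Units.val_mul, ← Units.val_mul, hU, Units.val_one]
    rw [e4, pow_zero, pow_one, hRz, ← map_mul, ← map_mul]
    have harg : ((ζ ^ ((p : ℤ) ^ (k + 1)) : Rˣ) : R) *
        (((ζ ^ ((1 : ℤ) - (p : ℤ) ^ (k + 1)) : Rˣ) : R) * u (k + 1)) * ((ζ⁻¹ : Rˣ) : R) =
        u (k + 1) := by
      linear_combination (u (k + 1)) * hR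
    rw [harg]
  · rw [mul_zero, zero_mul]
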